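/- Let g : ℝ^n → ℝ be a convex polynomial function with g(x) ≥ 0 for all x, and let A = {(x, z) ∈ ℝ^n × ℝ : z ≥ g(x)}. Let X ∈ ℝ^n be such that (X, 0) ∉ A, i.e., g(X) > 0. Then for (x, z) ∈ ℝ^n × ℝ, the point (x, z) equals the metric projection of (X, 0) onto A if and only if x_i + (∂g/∂x_i)(x) · g(x) = X_i for all i = 1, …, n and z = g(x). -/

import Mathlib

open MvPolynomial Finset

noncomputable def gradCLM (n : ℕ) (g : MvPolynomial (Fin n) ℝ) (x : Fin n → ℝ) :
    (Fin n → ℝ) →L[ℝ] ℝ :=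
  ∑ j : Fin n, MvPolynomial.eval x (MvPolynomial.pderiv j g) •
    (ContinuousLinearMap.proj j : ((Fin n → ℝ)) →L[ℝ] ℝ)

lemma gradCLM_apply (n : ℕ) (g : MvPolynomial (Fin n) ℝ) (x v : Fin n → ℝ) :
    gradCLM n g x v = ∑ j : Fin n, MvPolynomial.eval x (MvPolynomial.pderiv j g) * v j := by
  simp [gradCLM]

lemma hasFDerivAt_eval (n : ℕ) (g : MvPolynomial (Fin n) ℝ) (x : Fin n → ℝ) :
    HasFDerivAt (fun y : Fin n → ℝ => MvPolynomial.eval y g) (gradCLM n g x) x := by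
  induction g using MvPolynomial.induction_on with
  | C a =>
    have h0 : gradCLM n (C a) x = 0 := by
      ext v; simp [gradCLM, pderiv_C]
    simpa [h0, eval_C] using hasFDerivAt_const a x
  | add p q hp hq =>
    have h0 : gradCLM n (p + q) x = gradCLM n p x + gradCLM n q x := by
      ext v
      simp [gradCLM_apply, map_add, add_mul, Finset.sum_add_distrib]
    rw [h0]; simp only [eval_add]; exact hp.add hq
  | mul_X p i hp =>
    have h1 : HasFDerivAt (fun y : Fin n → ℝ => MvPolynomial.eval y p * y i)
        (MvPolynomial.eval x p • (ContinuousLinearMap.proj i : ((Fin n → ℝ)) →L[ℝ] ℝ)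
          + x i • gradCLM n p x) x := hp.mul (hasFDerivAt_apply i x)
    have h0 : gradCLM n (p * X i) x
        = MvPolynomial.eval x p • (ContinuousLinearMap.proj i : ((Fin n → ℝ)) →L[ℝ] ℝ)
          + x i • gradCLM n p x := by
      ext v
      classical
      have e : ∀ j : Fin n, MvPolynomial.eval x ((pderiv j) (p * X i))
          = MvPolynomial.eval x (pderiv j p) * x i
            + (if j = i then MvPolynomial.eval x p else 0) := by
        intro j; by_cases h : j = i <;> simp [pderiv_mul, h] <;> ring
      simp only [gradCLM_apply, ContinuousLinearMap.add_apply,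
        ContinuousLinearMap.smul_apply, ContinuousLinearMap.proj_apply, smul_eq_mul]
      rw [Finset.sum_congr rfl (fun j _ => by rw [e j])]
      have hsum : ∑ j : Fin n, (MvPolynomial.eval x (pderiv j p) * x i
            + (if j = i then MvPolynomial.eval x p else 0)) * v j
          = x i * (∑ j : Fin n, MvPolynomial.eval x (pderiv j p) * v j)
            + MvPolynomial.eval x p * v i := by
        rw [Finset.sum_congr rfl (fun j _ => add_mul _ _ _), Finset.sum_add_distrib]
        congr 1
        · rw [Finset.mul_sum]; exact Finset.sum_congr rfl fun j _ => by ring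
        · simp [ite_mul]
      rw [hsum]; ring
    rw [show (fun y : Fin n → ℝ => MvPolynomial.eval y (p * X i))
      = fun y : Fin n → ℝ => MvPolynomial.eval y p * y i from funext fun y => by simp, h0]
    exact h1

lemma grad_ineq (n : ℕ) (g : MvPolynomial (Fin n) ℝ)
    (hconv : ConvexOn ℝ Set.univ (fun x : Fin n → ℝ => MvPolynomial.eval x g))
    (x s : Fin n → ℝ) :
    MvPolynomial.eval x g + gradCLM n g x (s - x) ≤ MvPolynomial.eval s g := by
  set φ : ℝ → ℝ := fun t => MvPolynomial.eval (x + t • (s - x)) g with hφ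
  have hline : HasDerivAt (fun t : ℝ => x + t • (s - x)) (s - x) 0 := by
    simpa using ((hasDerivAt_id (0:ℝ)).smul_const (s - x)).const_add x
  have hfd : HasFDerivAt (fun y : Fin n → ℝ => MvPolynomial.eval y g) (gradCLM n g x)
      ((fun t : ℝ => x + t • (s - x)) 0) := by
    simpa using hasFDerivAt_eval n g x
  have hd : HasDerivAt φ (gradCLM n g x (s - x)) 0 := by
    have := hfd.comp_hasDerivAt 0 hline; exact this
  have hφconv : ConvexOn ℝ Set.univ φ := by
    have h := hconv.comp_affineMap (AffineMap.lineMap x s : ℝ →ᵃ[ℝ] (Fin n → ℝ))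
    rw [Set.preimage_univ] at h
    have hfe : φ = (fun x : Fin n → ℝ => MvPolynomial.eval x g) ∘ AffineMap.lineMap x s := by
      funext t
      simp [hφ, Function.comp, AffineMap.lineMap_apply_module', add_comm]
    rw [hfe]; exact h
  have hs := hφconv.le_slope_of_hasDerivAt (Set.mem_univ (0:ℝ)) (Set.mem_univ (1:ℝ))
    zero_lt_one hd
  have h0 : φ 0 = MvPolynomial.eval x g := by simp [hφ]
  have h1 : φ 1 = MvPolynomial.eval s g := by simp [hφ]
  rw [slope_def_field, h0, h1] at hs
  have hms : gradCLM n g x (s - x) = gradCLM n g x s - gradCLM n g x x := map_sub _ _ _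
  simp at hs
  linarith
open scoped RealInnerProductSpace

/-- `u` is the metric projection of `p` onto `S`. -/
def IsMetricProj {E : Type*} [NormedAddCommGroup E] (S : Set E) (p u : E) : Prop :=
  u ∈ S ∧ ∀ s ∈ S, ‖u - p‖ ≤ ‖s - p‖


theorem stmt5 (n : ℕ) (g : MvPolynomial (Fin n) ℝ)
    (hconv : ConvexOn ℝ Set.univ (fun x : Fin n → ℝ => MvPolynomial.eval x g))
    (hnonneg : ∀ x : Fin n → ℝ, 0 ≤ MvPolynomial.eval x g)
    (A : Set (EuclideanSpace ℝ (Fin (n + 1))))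
    (hA : A = {u | MvPolynomial.eval (fun i : Fin n => u i.castSucc) g ≤ u (Fin.last n)})
    (X : Fin n → ℝ) (hX : 0 < MvPolynomial.eval X g)
    (u : EuclideanSpace ℝ (Fin (n + 1))) :
    IsMetricProj A ((WithLp.equiv 2 (Fin (n + 1) → ℝ)).symm (Fin.snoc X 0)) u ↔
      ((∀ i : Fin n,
          u i.castSucc +
            MvPolynomial.eval (fun j : Fin n => u j.castSucc) (MvPolynomial.pderiv i g) *
              MvPolynomial.eval (fun j : Fin n => u j.castSucc) g = X i) ∧
        u (Fin.last n) = MvPolynomial.eval (fun j : Fin n => u j.castSucc) g) := by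
  classical
  set p : EuclideanSpace ℝ (Fin (n+1)) :=
    (WithLp.equiv 2 (Fin (n + 1) → ℝ)).symm (Fin.snoc X 0) with hp
  set x : Fin n → ℝ := fun i => u i.castSucc with hx
  set z : ℝ := u (Fin.last n) with hz
  have hpc : ∀ i : Fin n, p i.castSucc = X i := fun i => by simp [hp]
  have hpl : p (Fin.last n) = 0 := by simp [hp]
  have memA : ∀ w : EuclideanSpace ℝ (Fin (n+1)),
      w ∈ A ↔ MvPolynomial.eval (fun i : Fin n => w i.castSucc) g ≤ w (Fin.last n) := by
    intro w; rw [hA]; exact Iff.rfl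
  have snocMem : ∀ s : Fin n → ℝ, ∀ t : ℝ, MvPolynomial.eval s g ≤ t →
      ((WithLp.equiv 2 (Fin (n + 1) → ℝ)).symm (Fin.snoc s t)) ∈ A := by
    intro s t h
    rw [memA]
    simpa using h
  have hAconv : Convex ℝ A := by
    rw [hA]
    intro a ha b hb sc tc hsc htc hst
    simp only [Set.mem_setOf_eq] at ha hb ⊢
    have harg : (fun i : Fin n => (sc • a + tc • b) i.castSucc)
        = sc • (fun i => a i.castSucc) + tc • (fun i => b i.castSucc) := by
      funext i; simp
    have h2 := hconv.2 (Set.mem_univ (fun i => a i.castSucc))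
      (Set.mem_univ (fun i => b i.castSucc)) hsc htc hst
    simp only [smul_eq_mul] at h2
    rw [harg]
    refine le_trans h2 ?_
    have hlast : (sc • a + tc • b) (Fin.last n)
        = sc * a (Fin.last n) + tc * b (Fin.last n) := by simp
    rw [hlast]
    gcongr
  have inner_eval : ∀ w : EuclideanSpace ℝ (Fin (n+1)),
      ⟪p - u, w - u⟫ = (∑ i : Fin n, (X i - x i) * (w i.castSucc - x i))
        + (0 - z) * (w (Fin.last n) - z) := by
    intro w
    rw [PiLp.inner_apply]
    simp only [RCLike.inner_apply, starRingEnd_apply, star_trivial, PiLp.sub_apply]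
    rw [Fin.sum_univ_castSucc]
    congr 1
    · exact Finset.sum_congr rfl fun i _ => by rw [hpc i, hx]; exact mul_comm _ _
    · rw [hpl, hz]; exact mul_comm _ _
  have hbdd : BddBelow (Set.range fun w : A => ‖p - (w : EuclideanSpace ℝ (Fin (n+1)))‖) :=
    ⟨0, by rintro y ⟨w, rfl⟩; exact norm_nonneg _⟩
  have proj_iff : IsMetricProj A p u ↔ (u ∈ A ∧ ∀ w ∈ A, ⟪p - u, w - u⟫ ≤ 0) := by
    constructor
    · rintro ⟨huA, hmin⟩
      refine ⟨huA, ?_⟩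
      haveI : Nonempty ↥A := ⟨⟨u, huA⟩⟩
      rw [← norm_eq_iInf_iff_real_inner_le_zero hAconv huA]
      refine le_antisymm (le_ciInf fun w => ?_) (ciInf_le hbdd (⟨u, huA⟩ : A))
      rw [norm_sub_rev p u, norm_sub_rev p (w : EuclideanSpace ℝ (Fin (n+1)))]
      exact hmin w w.2
    · rintro ⟨huA, hVI⟩
      refine ⟨huA, fun s hs => ?_⟩
      have h := (norm_eq_iInf_iff_real_inner_le_zero hAconv huA).2 hVI
      calc ‖u - p‖ = ‖p - u‖ := norm_sub_rev _ _
        _ ≤ ‖p - s‖ := h ▸ ciInf_le hbdd (⟨s, hs⟩ : A)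
        _ = ‖s - p‖ := norm_sub_rev _ _
  rw [proj_iff]
  constructor
  · rintro ⟨huA, hVI⟩
    rw [memA u] at huA
    rw [← hx, ← hz] at huA
    have hz1 : z = MvPolynomial.eval x g := by
      have h := hVI _ (snocMem x (MvPolynomial.eval x g) le_rfl)
      rw [inner_eval] at h
      simp only [WithLp.equiv_symm_apply, PiLp.toLp_apply, Fin.snoc_castSucc, Fin.snoc_last,
        sub_self, mul_zero, Finset.sum_const_zero, zero_add] at h
      have hnn := hnonneg x
      refine le_antisymm ?_ huA
      nlinarith [h, hnn, huA]
    refine ⟨?_, hz1⟩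
    set L2 : (Fin n → ℝ) →L[ℝ] ℝ := ∑ j : Fin n, (X j - x j) •
      (ContinuousLinearMap.proj j : ((Fin n → ℝ)) →L[ℝ] ℝ) with hL2
    have hL2app : ∀ v : Fin n → ℝ, L2 v = ∑ j : Fin n, (X j - x j) * v j := by
      intro v; simp [hL2]
    have hmin : IsLocalMin (fun s : Fin n → ℝ =>
        MvPolynomial.eval x g * MvPolynomial.eval s g - L2 s) x := by
      refine Filter.Eventually.of_forall fun s => ?_
      have h := hVI _ (snocMem s (MvPolynomial.eval s g) le_rfl)
      rw [inner_eval] at h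
      simp only [WithLp.equiv_symm_apply, PiLp.toLp_apply, Fin.snoc_castSucc, Fin.snoc_last] at h
      rw [hz1] at h
      have hsum : ∑ j : Fin n, (X j - x j) * (s j - x j)
          = (∑ j : Fin n, (X j - x j) * s j) - ∑ j : Fin n, (X j - x j) * x j := by
        rw [← Finset.sum_sub_distrib]
        exact Finset.sum_congr rfl fun j _ => by ring
      rw [hsum] at h
      show MvPolynomial.eval x g * MvPolynomial.eval x g - L2 x
        ≤ MvPolynomial.eval x g * MvPolynomial.eval s g - L2 s
      rw [hL2app x, hL2app s]
      nlinarith [h]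
    have hd : HasFDerivAt (fun s : Fin n → ℝ =>
        MvPolynomial.eval x g * MvPolynomial.eval s g - L2 s)
        (MvPolynomial.eval x g • gradCLM n g x - L2) x :=
      ((hasFDerivAt_eval n g x).const_mul (MvPolynomial.eval x g)).sub L2.hasFDerivAt
    have h0 := hmin.hasFDerivAt_eq_zero hd
    intro i
    have hi := congrArg (fun T : ((Fin n → ℝ)) →L[ℝ] ℝ => T (Pi.single i 1)) h0
    simp only [ContinuousLinearMap.sub_apply, ContinuousLinearMap.smul_apply,
      ContinuousLinearMap.zero_apply, smul_eq_mul, gradCLM_apply, hL2app,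
      Pi.single_apply, mul_ite, mul_one, mul_zero, Finset.sum_ite_eq',
      Finset.mem_univ, if_true] at hi
    have hthis : MvPolynomial.eval x g * MvPolynomial.eval x (MvPolynomial.pderiv i g)
        = X i - x i := by linarith [hi]
    have hxu : x i = u i.castSucc := congrFun hx i
    linarith [hthis, hxu]
  · rintro ⟨heq, hzeq⟩
    refine ⟨by rw [memA u, ← hx, ← hz]; exact hzeq.ge, fun w hw => ?_⟩
    rw [memA w] at hw
    rw [inner_eval w]
    have hgw := grad_ineq n g hconv x (fun i => w i.castSucc)
    have hsum : ∑ i : Fin n, (X i - x i) * (w i.castSucc - x i)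
        = MvPolynomial.eval x g * (gradCLM n g x ((fun i => w i.castSucc) - x)) := by
      rw [gradCLM_apply, Finset.mul_sum]
      refine Finset.sum_congr rfl fun i _ => ?_
      have hxu : x i = u i.castSucc := congrFun hx i
      have hXi : X i - x i = MvPolynomial.eval x (MvPolynomial.pderiv i g)
          * MvPolynomial.eval x g := by linarith [heq i, hxu]
      rw [Pi.sub_apply, hXi]; ring
    rw [hsum, hzeq]
    have e1 := mul_le_mul_of_nonneg_left
      (show gradCLM n g x ((fun i => w i.castSucc) - x)
        ≤ MvPolynomial.eval (fun i => w i.castSucc) g - MvPolynomial.eval x g by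
          linarith [hgw]) (hnonneg x)
    have e2 := mul_nonneg (hnonneg x) (sub_nonneg.2 hw)
    nlinarith [e1, e2]
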